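/- Suppose α₀ > -1 satisfies q^{2(α₀+1)}(1-q)² < (1-q²)(1-q^{2α₀+2}). Then for all α ≥ α₀, the entire function F(t) = ∑_{k≥0}(-1)^k q^{2k(k+α)}(1-q)^{2k} t^{2k}/(2^{2k}(q²;q²)_k(q^{2α+2};q²)_k) has no zeros in the closed unit disk |t| ≤ 1; in particular F(t) > 0 for real t ∈ [-1,1]. -/

import Mathlib

/-- The q-shifted factorial `(a;q)_n`. -/
noncomputable def qPoch (a q : ℂ) (n : ℕ) : ℂ := ∏ k ∈ Finset.range n, (1 - a * q ^ k)

/-- The modified second Jackson q-Bessel function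
`F(t) = ∑ (-1)^k q^{2k(k+α)} (1-q)^{2k} t^{2k} / (2^{2k}(q²;q²)_k(q^{2α+2};q²)_k)`. -/
noncomputable def modJ2 (q α : ℝ) (t : ℂ) : ℂ :=
  ∑' k : ℕ, (-1) ^ k * (((q ^ (2 * k * ((k : ℝ) + α)) : ℝ)) : ℂ) *
      ((1 : ℂ) - q) ^ (2 * k) * t ^ (2 * k) /
    (2 ^ (2 * k) * qPoch ((q : ℂ) ^ 2) ((q : ℂ) ^ 2) k *
      qPoch (((q ^ (2 * α + 2) : ℝ) : ℂ)) ((q : ℂ) ^ 2) k)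


noncomputable def Aterm (q α : ℝ) (k : ℕ) : ℝ :=
  q ^ (2 * k * ((k : ℝ) + α)) * (1 - q) ^ (2 * k) /
    (2 ^ (2 * k) * (∏ j ∈ Finset.range k, (1 - q ^ 2 * (q ^ 2) ^ j)) *
      (∏ j ∈ Finset.range k, (1 - q ^ (2 * α + 2) * (q ^ 2) ^ j)))

lemma term_eq (q α : ℝ) (k : ℕ) (t : ℂ) :
    (-1) ^ k * (((q ^ (2 * k * ((k : ℝ) + α)) : ℝ)) : ℂ) *
      ((1 : ℂ) - q) ^ (2 * k) * t ^ (2 * k) /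
    (2 ^ (2 * k) * qPoch ((q : ℂ) ^ 2) ((q : ℂ) ^ 2) k *
      qPoch (((q ^ (2 * α + 2) : ℝ) : ℂ)) ((q : ℂ) ^ 2) k)
    = (-1) ^ k * ((Aterm q α k : ℝ) : ℂ) * t ^ (2 * k) := by
  simp only [Aterm, qPoch]
  push_cast
  ring

section
variable {q α : ℝ}

lemma qa_lt_one (hq : 0 < q) (hq1 : q < 1) (hα : -1 < α) : q ^ (2 * α + 2) < 1 := by
  have : (0:ℝ) < 2 * α + 2 := by linarith
  exact Real.rpow_lt_one hq.le hq1 this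

lemma factor1_pos (hq : 0 < q) (hq1 : q < 1) (j : ℕ) : 0 < 1 - q ^ 2 * (q ^ 2) ^ j := by
  have h2 : q ^ 2 < 1 := by nlinarith
  have h2' : (q ^ 2) ^ j ≤ 1 := pow_le_one₀ (by positivity) h2.le
  nlinarith [pow_pos (pow_pos hq 2) j]

lemma factor2_pos (hq : 0 < q) (hq1 : q < 1) (hα : -1 < α) (j : ℕ) : 0 < 1 - q ^ (2 * α + 2) * (q ^ 2) ^ j := by
  have h1 := qa_lt_one hq hq1 hα
  have h2 : q ^ 2 < 1 := by nlinarith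
  have h2' : (q ^ 2) ^ j ≤ 1 := pow_le_one₀ (by positivity) h2.le
  have h0 : 0 < q ^ (2 * α + 2) := Real.rpow_pos_of_pos hq _
  nlinarith [pow_pos (pow_pos hq 2) j]

lemma prod1_pos (hq : 0 < q) (hq1 : q < 1) (k : ℕ) : 0 < ∏ j ∈ Finset.range k, (1 - q ^ 2 * (q ^ 2) ^ j) :=
  Finset.prod_pos fun j _ => factor1_pos hq hq1 j

lemma prod2_pos (hq : 0 < q) (hq1 : q < 1) (hα : -1 < α) (k : ℕ) : 0 < ∏ j ∈ Finset.range k, (1 - q ^ (2 * α + 2) * (q ^ 2) ^ j) :=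
  Finset.prod_pos fun j _ => factor2_pos hq hq1 hα j

lemma Aterm_pos (hq : 0 < q) (hq1 : q < 1) (hα : -1 < α) (k : ℕ) : 0 < Aterm q α k := by
  unfold Aterm
  have hP := prod1_pos hq hq1 k
  have hQ := prod2_pos hq hq1 hα k
  have h0 : 0 < q ^ (2 * (k:ℝ) * ((k : ℝ) + α)) := Real.rpow_pos_of_pos hq _
  have h1 : 0 < (1 - q) ^ (2 * k) := pow_pos (by linarith) _
  have h2 : (0:ℝ) < 2 ^ (2 * k) := by positivity
  exact div_pos (mul_pos h0 h1) (mul_pos (mul_pos h2 hP) hQ)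

lemma Aterm_zero (q α : ℝ) : Aterm q α 0 = 1 := by simp [Aterm]

lemma Aterm_succ (hq : 0 < q) (hq1 : q < 1) (hα : -1 < α) (k : ℕ) :
    Aterm q α (k + 1) = Aterm q α k *
      (q ^ (2 * (2 * (k:ℝ) + 1 + α)) * (1 - q) ^ 2 /
        (4 * (1 - q ^ 2 * (q ^ 2) ^ k) * (1 - q ^ (2 * α + 2) * (q ^ 2) ^ k))) := by
  have hP := (prod1_pos hq hq1 k).ne'
  have hQ := (prod2_pos hq hq1 hα k).ne'
  have hf1 := (factor1_pos hq hq1 k).ne'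
  have hf2 := (factor2_pos hq hq1 hα k).ne'
  have hE : q ^ (2 * ((k:ℝ) + 1) * (((k:ℝ) + 1) + α))
      = q ^ (2 * (k:ℝ) * ((k : ℝ) + α)) * q ^ (2 * (2 * (k:ℝ) + 1 + α)) := by
    rw [← Real.rpow_add hq]; ring_nf
  unfold Aterm
  rw [Finset.prod_range_succ, Finset.prod_range_succ]
  push_cast
  rw [hE]
  have h2 : (2:ℝ) ^ (2 * (k + 1)) = 2 ^ (2 * k) * 4 := by ring
  have h3 : (1 - q) ^ (2 * (k + 1)) = (1 - q) ^ (2 * k) * (1 - q) ^ 2 := by ring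
  rw [h2, h3]
  field_simp

end

noncomputable def rbd (q α : ℝ) : ℝ :=
  q ^ (2 * (α + 1)) * (1 - q) ^ 2 / (4 * (1 - q ^ 2) * (1 - q ^ (2 * α + 2)))

lemma rbd_pos (hq : 0 < q) (hq1 : q < 1) (hα : -1 < α) : 0 < rbd q α := by
  unfold rbd
  have h1 : 0 < q ^ (2 * (α + 1)) := Real.rpow_pos_of_pos hq _
  have h2 : q ^ 2 < 1 := by nlinarith
  have h3 := qa_lt_one hq hq1 hα
  have h4 : (0:ℝ) < (1 - q) ^ 2 := pow_pos (by linarith) _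
  apply div_pos (mul_pos h1 h4)
  nlinarith

lemma ratio_le_rbd (hq : 0 < q) (hq1 : q < 1) (hα : -1 < α) (k : ℕ) :
    q ^ (2 * (2 * (k:ℝ) + 1 + α)) * (1 - q) ^ 2 /
      (4 * (1 - q ^ 2 * (q ^ 2) ^ k) * (1 - q ^ (2 * α + 2) * (q ^ 2) ^ k)) ≤ rbd q α := by
  unfold rbd
  have hf1 := factor1_pos hq hq1 k
  have hf2 := factor2_pos hq hq1 hα k
  have h2 : q ^ 2 < 1 := by nlinarith
  have h3 := qa_lt_one hq hq1 hα
  have hqk : (q ^ 2) ^ k ≤ 1 := pow_le_one₀ (by positivity) h2.le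
  have hnum : q ^ (2 * (2 * (k:ℝ) + 1 + α)) ≤ q ^ (2 * (α + 1)) := by
    apply Real.rpow_le_rpow_of_exponent_ge hq hq1.le
    have : (0:ℝ) ≤ (k:ℝ) := Nat.cast_nonneg k
    linarith
  have hd1 : 1 - q ^ 2 ≤ 1 - q ^ 2 * (q ^ 2) ^ k := by nlinarith [sq_nonneg q]
  have hd2 : 1 - q ^ (2 * α + 2) ≤ 1 - q ^ (2 * α + 2) * (q ^ 2) ^ k := by
    have h0 : 0 < q ^ (2 * α + 2) := Real.rpow_pos_of_pos hq _
    nlinarith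
  have hden : 4 * (1 - q ^ 2) * (1 - q ^ (2 * α + 2)) ≤
      4 * (1 - q ^ 2 * (q ^ 2) ^ k) * (1 - q ^ (2 * α + 2) * (q ^ 2) ^ k) := by
    have : 0 < 1 - q ^ (2 * α + 2) := by linarith
    nlinarith
  have hdenpos : 0 < 4 * (1 - q ^ 2) * (1 - q ^ (2 * α + 2)) := by nlinarith
  have hnn : 0 ≤ q ^ (2 * (α + 1)) * (1 - q) ^ 2 := by
    have := Real.rpow_pos_of_pos hq (2 * (α + 1))
    nlinarith
  exact div_le_div₀ hnn (by nlinarith [pow_pos (sub_pos.2 hq1) 2]) hdenpos hden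

lemma Aterm_le (hq : 0 < q) (hq1 : q < 1) (hα : -1 < α) (k : ℕ) :
    Aterm q α k ≤ rbd q α ^ k := by
  induction k with
  | zero => simp [Aterm_zero]
  | succ k ih =>
    rw [Aterm_succ hq hq1 hα k, pow_succ]
    have h1 := ratio_le_rbd hq hq1 hα k
    have h2 : 0 ≤ q ^ (2 * (2 * (k:ℝ) + 1 + α)) * (1 - q) ^ 2 /
      (4 * (1 - q ^ 2 * (q ^ 2) ^ k) * (1 - q ^ (2 * α + 2) * (q ^ 2) ^ k)) := by
      have hf1 := factor1_pos hq hq1 k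
      have hf2 := factor2_pos hq hq1 hα k
      have h0 := Real.rpow_pos_of_pos hq (2 * (2 * (k:ℝ) + 1 + α))
      have h4 : (0:ℝ) < (1 - q) ^ 2 := pow_pos (by linarith) _
      positivity
    have h3 := Aterm_pos hq hq1 hα k
    calc Aterm q α k * _ ≤ Aterm q α k * rbd q α := by
          exact mul_le_mul_of_nonneg_left h1 h3.le
      _ ≤ rbd q α ^ k * rbd q α := by
          exact mul_le_mul_of_nonneg_right ih (rbd_pos hq hq1 hα).le

lemma rbd_lt_quarter {q α₀ α : ℝ} (hq : 0 < q) (hq1 : q < 1) (hα₀ : -1 < α₀)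
    (hcond : q ^ (2 * (α₀ + 1)) * (1 - q) ^ 2 < (1 - q ^ 2) * (1 - q ^ (2 * α₀ + 2)))
    (hα : α₀ ≤ α) : rbd q α < 1 / 4 := by
  have hα' : -1 < α := lt_of_lt_of_le hα₀ hα
  have h2 : q ^ 2 < 1 := by nlinarith
  have h30 := qa_lt_one hq hq1 hα₀
  have h3 := qa_lt_one hq hq1 hα'
  have hden0 : (0:ℝ) < 4 * (1 - q ^ 2) * (1 - q ^ (2 * α₀ + 2)) := by nlinarith
  have hden : (0:ℝ) < 4 * (1 - q ^ 2) * (1 - q ^ (2 * α + 2)) := by nlinarith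
  have mono : rbd q α ≤ rbd q α₀ := by
    unfold rbd
    have hnum : q ^ (2 * (α + 1)) ≤ q ^ (2 * (α₀ + 1)) :=
      Real.rpow_le_rpow_of_exponent_ge hq hq1.le (by linarith)
    have hexp : q ^ (2 * α + 2) ≤ q ^ (2 * α₀ + 2) :=
      Real.rpow_le_rpow_of_exponent_ge hq hq1.le (by linarith)
    have hdle : 4 * (1 - q ^ 2) * (1 - q ^ (2 * α₀ + 2)) ≤
        4 * (1 - q ^ 2) * (1 - q ^ (2 * α + 2)) := by nlinarith
    have hnn : 0 ≤ q ^ (2 * (α₀ + 1)) * (1 - q) ^ 2 := by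
      have := Real.rpow_pos_of_pos hq (2 * (α₀ + 1)); nlinarith
    have hac : q ^ (2 * (α + 1)) * (1 - q) ^ 2 ≤ q ^ (2 * (α₀ + 1)) * (1 - q) ^ 2 := by
      nlinarith [pow_pos (sub_pos.2 hq1) 2]
    exact div_le_div₀ hnn hac hden0 hdle
  have h4 : rbd q α₀ < 1 / 4 := by
    unfold rbd
    rw [div_lt_iff₀ hden0]
    nlinarith
  linarith

/-- If `α₀ > -1` and `q^{2(α₀+1)}(1-q)² < (1-q²)(1-q^{2α₀+2})`, then for all `α ≥ α₀`
the function `F` has no zeros in the closed unit disk; in particular `F(t) > 0` for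
real `t ∈ [-1,1]`. -/
theorem stmt18 (q α₀ : ℝ) (hq : 0 < q) (hq1 : q < 1) (hα₀ : -1 < α₀)
    (hcond : q ^ (2 * (α₀ + 1)) * (1 - q) ^ 2 < (1 - q ^ 2) * (1 - q ^ (2 * α₀ + 2)))
    (α : ℝ) (hα : α₀ ≤ α) :
    (∀ t : ℂ, ‖t‖ ≤ 1 → modJ2 q α t ≠ 0) ∧
      ∀ t : ℝ, |t| ≤ 1 → 0 < (modJ2 q α (t : ℂ)).re ∧ (modJ2 q α (t : ℂ)).im = 0 := by
  have hα' : -1 < α := lt_of_lt_of_le hα₀ hα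
  set r := rbd q α with hrdef
  have hr0 : 0 < r := rbd_pos hq hq1 hα'
  have hr4 : r < 1 / 4 := rbd_lt_quarter hq hq1 hα₀ hcond hα
  have hr1 : r < 1 := by linarith
  have hA : ∀ k, 0 < Aterm q α k := Aterm_pos hq hq1 hα'
  have hAle : ∀ k, Aterm q α k ≤ r ^ k := Aterm_le hq hq1 hα'
  have hterm : ∀ t : ℂ, modJ2 q α t
      = ∑' k : ℕ, (-1) ^ k * ((Aterm q α k : ℝ) : ℂ) * t ^ (2 * k) := by
    intro t
    unfold modJ2
    exact tsum_congr fun k => term_eq q α k t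
  have hnormf : ∀ (t : ℂ), ‖t‖ ≤ 1 →
      ∀ k, ‖(-1 : ℂ) ^ k * ((Aterm q α k : ℝ) : ℂ) * t ^ (2 * k)‖ ≤ r ^ k := by
    intro t ht k
    rw [norm_mul, norm_mul, norm_pow, norm_pow]
    have h1 : ‖(-1 : ℂ)‖ = 1 := by simp
    have h2 : ‖((Aterm q α k : ℝ) : ℂ)‖ = Aterm q α k := by
      rw [Complex.norm_real, Real.norm_eq_abs, abs_of_pos (hA k)]
    have h3 : ‖t‖ ^ (2 * k) ≤ 1 := pow_le_one₀ (norm_nonneg t) ht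
    rw [h1, h2, one_pow, one_mul]
    calc Aterm q α k * ‖t‖ ^ (2 * k) ≤ Aterm q α k * 1 :=
          mul_le_mul_of_nonneg_left h3 (hA k).le
      _ = Aterm q α k := mul_one _
      _ ≤ r ^ k := hAle k
  have hsum : ∀ t : ℂ, ‖t‖ ≤ 1 →
      Summable (fun k : ℕ => (-1 : ℂ) ^ k * ((Aterm q α k : ℝ) : ℂ) * t ^ (2 * k)) := by
    intro t ht
    exact Summable.of_norm_bounded (summable_geometric_of_lt_one hr0.le hr1) (hnormf t ht)
  have h1r : (0:ℝ) < 1 - r := by linarith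
  have hgs : HasSum (fun k : ℕ => r ^ (k + 1)) (r * (1 - r)⁻¹) := by
    have h := (hasSum_geometric_of_lt_one hr0.le hr1).mul_left r
    have : (fun k : ℕ => r * r ^ k) = fun k : ℕ => r ^ (k + 1) := by
      funext k; rw [pow_succ]; ring
    rwa [this] at h
  have hhalf : r * (1 - r)⁻¹ < 1 / 2 := by
    rw [mul_inv_lt_iff₀ h1r]
    linarith
  have main : ∀ t : ℂ, ‖t‖ ≤ 1 → ∃ S : ℂ, modJ2 q α t = 1 + S ∧ ‖S‖ < 1 / 2 := by
    intro t ht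
    refine ⟨∑' k : ℕ, (-1 : ℂ) ^ (k + 1) * ((Aterm q α (k + 1) : ℝ) : ℂ) * t ^ (2 * (k + 1)),
      ?_, ?_⟩
    · rw [hterm t, Summable.tsum_eq_zero_add (hsum t ht)]
      congr 1
      simp [Aterm_zero]
    · have hb := tsum_of_norm_bounded hgs (fun k => hnormf t ht (k + 1))
      exact lt_of_le_of_lt hb hhalf
  constructor
  · intro t ht h0
    obtain ⟨S, hS, hSn⟩ := main t ht
    rw [hS] at h0
    have : S = -1 := by linear_combination h0
    rw [this] at hSn
    simp at hSn
    linarith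
  · intro t ht
    have htn : ‖(t : ℂ)‖ ≤ 1 := by rwa [Complex.norm_real, Real.norm_eq_abs]
    obtain ⟨S, hS, hSn⟩ := main (t : ℂ) htn
    constructor
    · rw [hS]
      have : |S.re| ≤ ‖S‖ := Complex.abs_re_le_norm S
      have h2 : |S.re| < 1 / 2 := lt_of_le_of_lt this hSn
      rw [abs_lt] at h2
      simp only [Complex.add_re, Complex.one_re]
      linarith
    · have heq : modJ2 q α (t : ℂ)
          = ∑' k : ℕ, ((((-1) ^ k * Aterm q α k * t ^ (2 * k) : ℝ)) : ℂ) := by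
        rw [hterm]
        exact tsum_congr fun k => by push_cast; ring
      rw [heq]
      have hsum' : Summable (fun k : ℕ => ((((-1) ^ k * Aterm q α k * t ^ (2 * k) : ℝ)) : ℂ)) := by
        have := hsum (t : ℂ) htn
        refine this.congr fun k => ?_
        push_cast; ring
      have := Complex.imCLM.map_tsum hsum'
      simp only [Complex.imCLM_apply] at this
      rw [this]
      simp only [Complex.ofReal_im, tsum_zero]
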